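/- Let 0 < Λ < 1 and let (ε_n), (ε̃_n) be sequences of reals in (0, 1/2) with ε̃_n = ε_n·(1 + r_n) where r_n → 0 and ε_n → 0. If ln(−ln ε̃_n) = −n·ln Λ + β + θ·Λⁿ + o(Λⁿ), then also ln(−ln ε_n) = −n·ln Λ + β + θ·Λⁿ + o(Λⁿ). -/

import Mathlib

open Filter Asymptotics

lemma my_abs_log_one_add_le {x : ℝ} (hx : |x| ≤ 1/2) : |Real.log (1 + x)| ≤ 2 * |x| := by
  have hx1 : -(1/2) ≤ x := (abs_le.1 hx).1
  have hx2 : x ≤ 1/2 := (abs_le.1 hx).2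
  have hpos : (0:ℝ) < 1 + x := by linarith
  have h1 : Real.log (1 + x) ≤ 2 * |x| := by
    have := Real.log_le_sub_one_of_pos hpos
    have := le_abs_self x
    have := abs_nonneg x
    linarith
  have h2 : -(2 * |x|) ≤ Real.log (1 + x) := by
    have h := Real.log_le_sub_one_of_pos (x := (1+x)⁻¹) (by positivity)
    rw [Real.log_inv] at h
    have hc : (1+x)⁻¹ * (1+x) = 1 := inv_mul_cancel₀ hpos.ne'
    have hy : 0 < (1+x)⁻¹ := inv_pos.2 hpos
    have hax : -x ≤ |x| := neg_le_abs x
    have hax2 : x ≤ |x| := le_abs_self x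
    nlinarith [mul_nonneg (abs_nonneg x) hy.le, mul_pos hy hpos]
  exact abs_le.2 ⟨h2, h1⟩

theorem stmt_7 (Λ β θ : ℝ) (hΛ0 : 0 < Λ) (hΛ1 : Λ < 1)
    (ε ε' r : ℕ → ℝ)
    (hε : ∀ n, ε n ∈ Set.Ioo (0 : ℝ) (1/2)) (hε' : ∀ n, ε' n ∈ Set.Ioo (0 : ℝ) (1/2))
    (hr : Tendsto r atTop (nhds 0)) (hε0 : Tendsto ε atTop (nhds 0))
    (hrel : ∀ n, ε' n = ε n * (1 + r n)) (hrpos : ∀ n, 0 < 1 + r n)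
    (hasy : (fun n => Real.log (-Real.log (ε' n)) -
        (-(n : ℝ) * Real.log Λ + β + θ * Λ ^ n)) =o[atTop] fun n => Λ ^ n) :
    (fun n => Real.log (-Real.log (ε n)) -
        (-(n : ℝ) * Real.log Λ + β + θ * Λ ^ n)) =o[atTop] fun n => Λ ^ n := by
  set L : ℕ → ℝ := fun n => -Real.log (ε' n) with hL
  have hLpos : ∀ n, 0 < L n := by
    intro n
    have : Real.log (ε' n) < 0 := Real.log_neg (hε' n).1 (by linarith [(hε' n).2])
    simpa [hL] using neg_pos.2 this
  have hMpos : ∀ n, 0 < -Real.log (ε n) := by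
    intro n
    have : Real.log (ε n) < 0 := Real.log_neg (hε n).1 (by linarith [(hε n).2])
    linarith
  have hkey : ∀ n, -Real.log (ε n) = L n + Real.log (1 + r n) := by
    intro n
    have h : Real.log (ε' n) = Real.log (ε n) + Real.log (1 + r n) := by
      rw [hrel n, Real.log_mul (hε n).1.ne' (hrpos n).ne']
    simp only [hL, h]; ring
  set u : ℕ → ℝ := fun n => Real.log (1 + r n) / L n with hu
  have hLu : ∀ n, L n * (1 + u n) = -Real.log (ε n) := by
    intro n
    have : L n * (1 + u n) = L n + L n * (Real.log (1 + r n) / L n) := by ring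
    rw [this, mul_div_cancel₀ _ (hLpos n).ne', hkey n]
  have h1u : ∀ n, 0 < 1 + u n := by
    intro n
    have h := hMpos n
    rw [← hLu n] at h
    nlinarith [hLpos n]
  have hΛ0' : Tendsto (fun n : ℕ => Λ ^ n) atTop (nhds 0) :=
    tendsto_pow_atTop_nhds_zero_of_lt_one hΛ0.le hΛ1
  have hlr : Tendsto (fun n => Real.log (1 + r n)) atTop (nhds 0) := by
    have h : Tendsto (fun n => 1 + r n) atTop (nhds 1) := by
      simpa using (tendsto_const_nhds (x := (1:ℝ))).add hr
    simpa [Function.comp_def] using (Real.continuousAt_log (by norm_num : (1:ℝ) ≠ 0)).tendsto.comp h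
  -- step 1 : (L n)⁻¹ = O(Λ^n)
  have hg0 : Tendsto (fun n => Real.log (L n) -
      (-(n : ℝ) * Real.log Λ + β + θ * Λ ^ n)) atTop (nhds 0) :=
    hasy.isBigO.trans_tendsto hΛ0'
  have hinvO : (fun n => (L n)⁻¹) =O[atTop] (fun n : ℕ => Λ ^ n) := by
    rw [isBigO_iff]
    refine ⟨Real.exp (1 + |θ| - β), ?_⟩
    have hge : ∀ᶠ n in atTop, |Real.log (L n) -
        (-(n : ℝ) * Real.log Λ + β + θ * Λ ^ n)| < 1 := by
      simpa [Real.dist_eq] using (Metric.tendsto_nhds.1 hg0) 1 one_pos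
    filter_upwards [hge] with n hn
    have hpow1 : Λ ^ n ≤ 1 := pow_le_one₀ hΛ0.le hΛ1.le
    have hθ : -|θ| ≤ θ * Λ ^ n := by
      have : |θ * Λ ^ n| ≤ |θ| := by
        rw [abs_mul, abs_of_pos (pow_pos hΛ0 n)]
        nlinarith [abs_nonneg θ, pow_pos hΛ0 n]
      linarith [neg_abs_le (θ * Λ ^ n)]
    have hlog : (n : ℝ) * (-Real.log Λ) + (β - |θ| - 1) ≤ Real.log (L n) := by
      have := abs_lt.1 hn
      push_cast
      nlinarith [this.1, this.2]
    have hLge : Real.exp ((n : ℝ) * (-Real.log Λ) + (β - |θ| - 1)) ≤ L n := by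
      calc Real.exp ((n : ℝ) * (-Real.log Λ) + (β - |θ| - 1))
          ≤ Real.exp (Real.log (L n)) := Real.exp_le_exp.2 hlog
        _ = L n := Real.exp_log (hLpos n)
    have hexp : Real.exp ((n : ℝ) * (-Real.log Λ) + (β - |θ| - 1)) =
        (Λ ^ n)⁻¹ * Real.exp (β - |θ| - 1) := by
      rw [Real.exp_add]
      congr 1
      rw [show (n : ℝ) * (-Real.log Λ) = -((n:ℝ) * Real.log Λ) by ring,
        Real.exp_neg, Real.exp_nat_mul, Real.exp_log hΛ0]
    have hpowpos : (0:ℝ) < Λ ^ n := pow_pos hΛ0 n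
    rw [Real.norm_eq_abs, Real.norm_eq_abs, abs_of_pos (inv_pos.2 (hLpos n)),
      abs_of_pos hpowpos]
    rw [hexp] at hLge
    have h1 : (L n)⁻¹ ≤ ((Λ ^ n)⁻¹ * Real.exp (β - |θ| - 1))⁻¹ := by
      apply inv_anti₀ (by positivity) hLge
    rw [mul_inv, inv_inv, ← Real.exp_neg] at h1
    calc (L n)⁻¹ ≤ Λ ^ n * Real.exp (-(β - |θ| - 1)) := h1
      _ = Real.exp (1 + |θ| - β) * Λ ^ n := by ring_nf
  -- step 2 : u = o(Λ^n)
  have huo : u =o[atTop] (fun n : ℕ => Λ ^ n) := by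
    have h1 : (fun n => Real.log (1 + r n)) =o[atTop] (fun _ : ℕ => (1:ℝ)) :=
      (isLittleO_one_iff ℝ).2 hlr
    have := h1.mul_isBigO hinvO
    simpa [hu, div_eq_mul_inv] using this
  have hu0 : Tendsto u atTop (nhds 0) := huo.isBigO.trans_tendsto hΛ0'
  -- step 3 : log (1+u) = o(Λ^n)
  have hloguO : (fun n => Real.log (1 + u n)) =O[atTop] u := by
    rw [isBigO_iff]
    refine ⟨2, ?_⟩
    have hev : ∀ᶠ n in atTop, |u n| ≤ 1/2 := by
      have := (Metric.tendsto_nhds.1 hu0) (1/2) (by norm_num)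
      filter_upwards [this] with n hn
      rw [Real.dist_eq, sub_zero] at hn
      exact hn.le
    filter_upwards [hev] with n hn
    simpa [Real.norm_eq_abs] using my_abs_log_one_add_le hn
  have hlogu : (fun n => Real.log (1 + u n)) =o[atTop] (fun n : ℕ => Λ ^ n) :=
    hloguO.trans_isLittleO huo
  -- conclude
  have heq : (fun n => Real.log (-Real.log (ε n)) -
      (-(n : ℝ) * Real.log Λ + β + θ * Λ ^ n)) =
      fun n => (Real.log (L n) - (-(n : ℝ) * Real.log Λ + β + θ * Λ ^ n)) +
        Real.log (1 + u n) := by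
    funext n
    have : Real.log (-Real.log (ε n)) = Real.log (L n) + Real.log (1 + u n) := by
      rw [← hLu n, Real.log_mul (hLpos n).ne' (h1u n).ne']
    rw [this]; ring
  rw [heq]
  exact hasy.add hlogu
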